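/- Spectral-gap upper bound on the cost of MEV over a graph: let V be a finite nonempty type with N = |V|, let Q : (V → ℝ) → ℝ be the Laplacian quadratic form of a simple graph G on V, Q(v) = ∑ over edges {i,j} of G of (v i − v j)², and let c > 0 satisfy c·(∑ i, (v i)²) ≤ Q(v) for every v : V → ℝ with ∑ i, v i = 0. Then for every f : V → ℝ, C(f) := (max over i of f i) − (∑ i, f i)/N satisfies C(f) ≤ √(Q(f)/c). -/

import Mathlib

/-- The Laplacian quadratic form of a simple graph: `Q(f) = ∑_{{i,j} ∈ E} (f i - f j)²`. -/
def lapQuadForm {V : Type*} [Fintype V] [DecidableEq V] (G : SimpleGraph V)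
    [DecidableRel G.Adj] (f : V → ℝ) : ℝ :=
  ∑ e ∈ G.edgeFinset, Sym2.lift ⟨fun i j => (f i - f j) ^ 2, fun a b => by ring⟩ e

lemma lapQuadForm_sub_const {V : Type*} [Fintype V] [DecidableEq V] (G : SimpleGraph V)
    [DecidableRel G.Adj] (f : V → ℝ) (μ : ℝ) :
    lapQuadForm G (fun i => f i - μ) = lapQuadForm G f := by
  unfold lapQuadForm
  refine Finset.sum_congr rfl fun e _ => ?_
  induction e using Sym2.ind with
  | _ a b => simp only [Sym2.lift_mk]; ring

/-- Spectral-gap upper bound on the cost of MEV over a graph: if `c > 0` is a lower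
bound on the Laplacian quadratic form over mean-zero vectors (i.e. `c ≤ λ₂`), then
`C(f) = max f - mean f ≤ √(Q(f)/c)`. -/
theorem mevCost_le_sqrt_quadForm_div_gap {V : Type*} [Fintype V] [DecidableEq V]
    [Nonempty V] (G : SimpleGraph V) [DecidableRel G.Adj] (c : ℝ) (hc : 0 < c)
    (hgap : ∀ v : V → ℝ, ∑ i, v i = 0 → c * ∑ i, (v i) ^ 2 ≤ lapQuadForm G v)
    (f : V → ℝ) :
    (Finset.univ.sup' Finset.univ_nonempty f) - (∑ i, f i) / (Fintype.card V : ℝ) ≤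
      Real.sqrt (lapQuadForm G f / c) := by
  set N : ℝ := (Fintype.card V : ℝ) with hN
  have hNpos : (0:ℝ) < N := by
    simp [hN, Fintype.card_pos]
  set μ : ℝ := (∑ i, f i) / N with hμ
  set v : V → ℝ := fun i => f i - μ with hv
  have hsum : ∑ i, v i = 0 := by
    simp only [hv, Finset.sum_sub_distrib, Finset.sum_const, Finset.card_univ, nsmul_eq_mul]
    field_simp [hμ]
    rw [hμ, mul_div_cancel₀ _ hNpos.ne', sub_self]
  have hQ : c * ∑ i, (v i) ^ 2 ≤ lapQuadForm G f := by
    have := hgap v hsum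
    rwa [hv, lapQuadForm_sub_const] at this
  obtain ⟨i₀, _, hi₀⟩ := Finset.exists_mem_eq_sup' Finset.univ_nonempty f
  rw [hi₀]
  have h1 : (v i₀) ^ 2 ≤ ∑ i, (v i) ^ 2 :=
    Finset.single_le_sum (fun i _ => sq_nonneg (v i)) (Finset.mem_univ i₀)
  have h2 : (v i₀) ^ 2 ≤ lapQuadForm G f / c := by
    rw [le_div_iff₀ hc, mul_comm]
    exact le_trans (by nlinarith) hQ
  calc f i₀ - μ = v i₀ := rfl
    _ ≤ Real.sqrt ((v i₀) ^ 2) := by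
        rw [Real.sqrt_sq_eq_abs]; exact le_abs_self _
    _ ≤ Real.sqrt (lapQuadForm G f / c) := Real.sqrt_le_sqrt h2
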